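/- There exists a constant C > 0 such that for all 0 < s < t ≤ 1 and x, y ∈ [0,1], the heat kernel G on the circle [0,1] satisfies ∫₀ᵗ ∫₀¹ [G(s, x−z) − G(s, y−z)]² dz ds ≤ C|x−y|. -/

import Mathlib

open MeasureTheory Real Set
open scoped Real

/-- Heat kernel on the circle `[0,1]` with endpoints identified. -/
noncomputable def G (t x : ℝ) : ℝ :=
  ∑' n : ℤ, (Real.sqrt (2 * Real.pi * t))⁻¹ * Real.exp (-(x + (n : ℝ)) ^ 2 / (2 * t))

lemma summable_exp_sq {c : ℝ} (hc : 0 < c) :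
    Summable fun n : ℤ => rexp (-(c * (n:ℝ) ^ 2)) := by
  have key : Summable fun n : ℕ => rexp (-(c * (n:ℝ) ^ 2)) := by
    refine Summable.of_nonneg_of_le (fun n => (Real.exp_pos _).le)
      (fun n => ?_) (summable_geometric_of_lt_one (r := rexp (-c)) (Real.exp_pos _).le
        (Real.exp_lt_one_iff.2 (by linarith)))
    rw [← Real.exp_nat_mul]
    apply Real.exp_le_exp.2
    have : (n : ℝ) ≤ (n:ℝ)^2 := by
      exact_mod_cast Nat.le_self_pow two_ne_zero n
    nlinarith
  refine Summable.of_nat_of_neg ?_ ?_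
  · exact key
  · simpa using key

noncomputable def fmode (m : ℤ) (z : ℝ) : ℂ := Complex.exp ((2 * π * m * z : ℝ) * Complex.I)

lemma fmode_abs (m : ℤ) (z : ℝ) : ‖fmode m z‖ = 1 := by
  simpa [fmode] using Complex.norm_exp_ofReal_mul_I (2 * π * m * z)

lemma fmode_norm (m : ℤ) (z : ℝ) : ‖fmode m z‖ = 1 := by
  rw [fmode_abs]

lemma fmode_mul (m l : ℤ) (z : ℝ) : fmode m z * fmode l z = fmode (m + l) z := by
  rw [fmode, fmode, fmode, ← Complex.exp_add]; congr 1; push_cast; ring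

lemma fmode_continuous (m : ℤ) : Continuous (fmode m) := by unfold fmode; fun_prop

lemma integral_fmode (m : ℤ) :
    ∫ z in Ioc (0:ℝ) 1, fmode m z = if m = 0 then 1 else 0 := by
  rcases eq_or_ne m 0 with hm | hm
  · simp [hm, fmode]
  · rw [if_neg hm, ← intervalIntegral.integral_of_le (zero_le_one)]
    have hc : (2 * (π:ℂ) * Complex.I * m) ≠ 0 := by
      simp [Complex.I_ne_zero, Real.pi_ne_zero, hm, Complex.ofReal_ne_zero]
    have : ∀ z : ℝ, fmode m z = Complex.exp ((2 * (π:ℂ) * Complex.I * m) * z) := by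
      intro z; rw [fmode]; congr 1; push_cast; ring
    simp_rw [this]
    rw [integral_exp_mul_complex hc]
    have h1 : (2 * (π:ℂ) * Complex.I * m) * (1:ℝ) = (m:ℂ) * (2 * π * Complex.I) := by
      push_cast; ring
    have h0 : (2 * (π:ℂ) * Complex.I * m) * (0:ℝ) = 0 := by push_cast; ring
    rw [h1, h0, Complex.exp_int_mul_two_pi_mul_I, Complex.exp_zero, sub_self, zero_div]

lemma lint_le {g : ℝ → ℂ} {B : ℝ} (hB : ∀ z, ‖g z‖ ≤ B) :
    ∫⁻ z in Ioc (0:ℝ) 1, ‖g z‖₊ ≤ ENNReal.ofReal B := by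
  refine (lintegral_mono (g := fun _ => ENNReal.ofReal B) fun z => ?_).trans ?_
  · rw [← enorm_eq_nnnorm, ← ofReal_norm]
    exact ENNReal.ofReal_le_ofReal (hB z)
  · rw [lintegral_const]
    simp [Real.volume_Ioc]

lemma orth {d : ℤ → ℂ} (hd : Summable fun k => ‖d k‖) :
    ∫ z in Ioc (0:ℝ) 1, ((∑' k : ℤ, d k * fmode k z) * ∑' l : ℤ, d l * fmode l z)
      = ∑' k : ℤ, d k * d (-k) := by
  set M : ℝ := ∑' k : ℤ, ‖d k‖ with hM
  have hdsm : ∀ z : ℝ, Summable fun l : ℤ => d l * fmode l z := by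
    intro z
    refine Summable.of_norm ?_
    simpa [norm_mul, fmode_abs] using hd
  set F : ℝ → ℂ := fun z => ∑' l : ℤ, d l * fmode l z with hF
  have hFb : ∀ z, ‖F z‖ ≤ M := by
    intro z
    refine (norm_tsum_le_tsum_norm ?_).trans ?_
    · simpa [norm_mul, fmode_abs] using hd
    · refine le_of_eq (tsum_congr fun l => ?_)
      rw [norm_mul, fmode_norm, mul_one]
  have hFc : Continuous F := by
    refine continuous_tsum (fun l => (continuous_const.mul (fmode_continuous l))) hd ?_
    intro l z
    rw [norm_mul, fmode_norm, mul_one]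
  -- swap the k-sum out of the integral
  have step1 : ∀ z : ℝ, (∑' k : ℤ, d k * fmode k z) * F z
      = ∑' k : ℤ, d k * fmode k z * F z := by
    intro z; exact (tsum_mul_right).symm
  have meas1 : ∀ k : ℤ, AEStronglyMeasurable (fun z => d k * fmode k z * F z)
      (volume.restrict (Ioc (0:ℝ) 1)) :=
    fun k => ((continuous_const.mul (fmode_continuous k)).mul hFc).aestronglyMeasurable
  have bound1 : ∀ k : ℤ, ∀ z : ℝ, ‖d k * fmode k z * F z‖ ≤ ‖d k‖ * M := by
    intro k z
    rw [norm_mul, norm_mul, fmode_norm, mul_one]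
    exact mul_le_mul_of_nonneg_left (hFb z) (norm_nonneg _)
  have hMnn : 0 ≤ M := tsum_nonneg fun k => norm_nonneg _
  have sum1 : (∑' k : ℤ, ∫⁻ z in Ioc (0:ℝ) 1, ‖d k * fmode k z * F z‖₊) ≠ ⊤ := by
    have le1 : (∑' k : ℤ, ∫⁻ z in Ioc (0:ℝ) 1, ‖d k * fmode k z * F z‖₊)
        ≤ ∑' k : ℤ, ENNReal.ofReal (‖d k‖ * M) :=
      ENNReal.tsum_le_tsum fun k => lint_le (bound1 k)
    rw [← ENNReal.ofReal_tsum_of_nonneg (fun k => mul_nonneg (norm_nonneg _) hMnn)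
      (hd.mul_right M)] at le1
    exact ((le1).trans_lt ENNReal.ofReal_lt_top).ne
  have swap1 : ∫ z in Ioc (0:ℝ) 1, ((∑' k : ℤ, d k * fmode k z) * F z)
      = ∑' k : ℤ, ∫ z in Ioc (0:ℝ) 1, d k * fmode k z * F z := by
    simp_rw [step1]
    exact integral_tsum meas1 sum1
  -- inner integral
  have inner : ∀ k : ℤ, ∫ z in Ioc (0:ℝ) 1, d k * fmode k z * F z = d k * d (-k) := by
    intro k
    have expand : ∀ z : ℝ, d k * fmode k z * F z
        = ∑' l : ℤ, d k * d l * fmode (k + l) z := by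
      intro z
      rw [hF, ← tsum_mul_left]
      refine tsum_congr fun l => ?_
      rw [show d k * fmode k z * (d l * fmode l z) = d k * d l * (fmode k z * fmode l z) by ring,
        fmode_mul]
    have meas2 : ∀ l : ℤ, AEStronglyMeasurable (fun z => d k * d l * fmode (k + l) z)
        (volume.restrict (Ioc (0:ℝ) 1)) :=
      fun l => (continuous_const.mul (fmode_continuous (k+l))).aestronglyMeasurable
    have bound2 : ∀ l : ℤ, ∀ z : ℝ, ‖d k * d l * fmode (k + l) z‖ ≤ ‖d k‖ * ‖d l‖ := by
      intro l z
      rw [norm_mul, norm_mul, fmode_norm, mul_one]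
    have sum2 : (∑' l : ℤ, ∫⁻ z in Ioc (0:ℝ) 1, ‖d k * d l * fmode (k + l) z‖₊) ≠ ⊤ := by
      have le2 : (∑' l : ℤ, ∫⁻ z in Ioc (0:ℝ) 1, ‖d k * d l * fmode (k + l) z‖₊)
          ≤ ∑' l : ℤ, ENNReal.ofReal (‖d k‖ * ‖d l‖) :=
        ENNReal.tsum_le_tsum fun l => lint_le (bound2 l)
      rw [← ENNReal.ofReal_tsum_of_nonneg (fun l => mul_nonneg (norm_nonneg _) (norm_nonneg _))
        (hd.mul_left _)] at le2
      exact ((le2).trans_lt ENNReal.ofReal_lt_top).ne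
    simp_rw [expand]
    rw [integral_tsum meas2 sum2]
    have : ∀ l : ℤ, ∫ z in Ioc (0:ℝ) 1, d k * d l * fmode (k + l) z
        = d k * d l * (if k + l = 0 then 1 else 0) := by
      intro l
      rw [MeasureTheory.integral_const_mul, integral_fmode]
    simp_rw [this]
    rw [tsum_eq_single (-k) ?_]
    · simp
    · intro l hl
      rw [if_neg (by omega), mul_zero]
  rw [swap1]
  exact tsum_congr inner

lemma G_complex {t : ℝ} (ht : 0 < t) (x : ℝ) :
    ((G t x : ℝ) : ℂ) = ∑' n : ℤ,
      (rexp (-(2 * π ^ 2 * t * (n : ℝ) ^ 2)) : ℂ)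
        * Complex.exp ((-(2 * π * n * x) : ℝ) * Complex.I) := by
  have h2πt : (0:ℝ) < 2 * π * t := by positivity
  have ha : (0:ℝ) < (((2 * π * t : ℝ) : ℂ)).re := by simpa using h2πt
  have key := Complex.tsum_exp_neg_quadratic ha (-Complex.I * (x:ℂ))
  have hconst : (1 : ℂ) / (((2 * π * t : ℝ):ℂ)) ^ (1/2 : ℂ)
      = ((Real.sqrt (2 * π * t))⁻¹ : ℝ) := by
    rw [Real.sqrt_eq_rpow, Complex.ofReal_inv, Complex.ofReal_cpow h2πt.le]
    norm_num
  calc ((G t x : ℝ) : ℂ)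
      = ∑' n : ℤ, (1 / (((2 * π * t : ℝ):ℂ)) ^ (1/2 : ℂ))
        * Complex.exp (-(π:ℂ) / ((2 * π * t : ℝ):ℂ)
            * ((n:ℂ) + Complex.I * (-Complex.I * (x:ℂ))) ^ 2) := by
        rw [G, Complex.ofReal_tsum]
        refine tsum_congr fun n => ?_
        rw [hconst]
        push_cast
        rw [show Complex.I * (-Complex.I * (x:ℂ)) = (x:ℂ) by
          rw [← mul_assoc, mul_neg, Complex.I_mul_I]; ring]
        have hπ : (π:ℂ) ≠ 0 := by exact_mod_cast Real.pi_ne_zero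
        have htc : (t:ℂ) ≠ 0 := by exact_mod_cast ht.ne'
        congr 2
        field_simp
        ring
    _ = (1 / (((2 * π * t : ℝ):ℂ)) ^ (1/2 : ℂ)) * ∑' n : ℤ,
          Complex.exp (-(π:ℂ) / ((2 * π * t : ℝ):ℂ)
            * ((n:ℂ) + Complex.I * (-Complex.I * (x:ℂ))) ^ 2) := tsum_mul_left
    _ = ∑' n : ℤ, Complex.exp (-(π:ℂ) * ((2 * π * t : ℝ):ℂ) * (n:ℂ) ^ 2
            + 2 * (π:ℂ) * (-Complex.I * (x:ℂ)) * (n:ℂ)) := key.symm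
    _ = ∑' n : ℤ, (rexp (-(2 * π ^ 2 * t * (n : ℝ) ^ 2)) : ℂ)
        * Complex.exp ((-(2 * π * n * x) : ℝ) * Complex.I) := by
        refine tsum_congr fun n => ?_
        rw [show -(π:ℂ) * ((2 * π * t : ℝ):ℂ) * (n:ℂ) ^ 2
            + 2 * (π:ℂ) * (-Complex.I * (x:ℂ)) * (n:ℂ)
            = ((-(2 * π ^ 2 * t * (n:ℝ) ^ 2) : ℝ) : ℂ)
              + ((-(2 * π * n * x) : ℝ):ℂ) * Complex.I by push_cast; ring]
        rw [Complex.exp_add, Complex.ofReal_exp]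

noncomputable def E (θ : ℝ) : ℂ := Complex.exp ((θ : ℝ) * Complex.I)

lemma E_mul (u v : ℝ) : E u * E v = E (u + v) := by
  rw [E, E, E, ← Complex.exp_add]; congr 1; push_cast; ring

lemma E_add_neg (θ : ℝ) : E θ + E (-θ) = 2 * Real.cos θ := by
  rw [E, E, Complex.ofReal_cos, Complex.two_cos, Complex.ofReal_neg]

lemma E_norm (θ : ℝ) : ‖E θ‖ = 1 := by
  simpa [E] using Complex.abs_exp_ofReal_mul_I θ

lemma inner_eq {r : ℝ} (hr : 0 < r) (x y : ℝ) :
    ∫ z in Ioc (0:ℝ) 1, (G r (x - z) - G r (y - z)) ^ 2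
      = ∑' k : ℤ, rexp (-(4 * π ^ 2 * r * (k:ℝ) ^ 2))
          * (2 - 2 * Real.cos (2 * π * k * (x - y))) := by
  set c : ℤ → ℝ := fun k => rexp (-(2 * π ^ 2 * r * (k:ℝ) ^ 2)) with hc
  set d : ℤ → ℂ := fun k => (c k : ℂ) * (E (-(2 * π * k * x)) - E (-(2 * π * k * y))) with hd
  have hcsum : Summable c := summable_exp_sq (by positivity)
  have hdnorm : Summable fun k => ‖d k‖ := by
    refine Summable.of_nonneg_of_le (fun k => norm_nonneg _) (fun k => ?_) (hcsum.mul_right 2)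
    rw [hd]
    simp only [hc, norm_mul, Complex.norm_real, Real.norm_eq_abs, abs_of_pos (Real.exp_pos _)]
    refine mul_le_mul_of_nonneg_left ?_ (Real.exp_pos _).le
    refine (norm_sub_le _ _).trans ?_
    rw [E_norm, E_norm]; norm_num
  -- the difference as a Fourier series
  have repr : ∀ w z : ℝ, ((G r (w - z) : ℝ) : ℂ)
      = ∑' k : ℤ, (c k : ℂ) * E (-(2 * π * k * w)) * fmode k z := by
    intro w z
    rw [G_complex hr (w - z)]
    refine tsum_congr fun k => ?_
    rw [mul_assoc ((c k : ℝ) : ℂ)]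
    congr 1
    simp only [E, fmode]
    rw [← Complex.exp_add]
    congr 1
    push_cast
    ring
  have hsummand : ∀ w z : ℝ, Summable fun k : ℤ => (c k : ℂ) * E (-(2 * π * k * w)) * fmode k z := by
    intro w z
    refine Summable.of_norm ?_
    have : ∀ k : ℤ, ‖(c k : ℂ) * E (-(2 * π * k * w)) * fmode k z‖ = c k := by
      intro k
      rw [norm_mul, norm_mul, E_norm]
      simp [Complex.norm_real, Real.norm_eq_abs, abs_of_pos (show 0 < c k from Real.exp_pos _),
        show ‖fmode k z‖ = 1 by simpa [fmode] using Complex.norm_exp_ofReal_mul_I (2*π*k*z)]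
    simpa only [this] using hcsum
  have diff_repr : ∀ z : ℝ, ((G r (x - z) - G r (y - z) : ℝ) : ℂ)
      = ∑' k : ℤ, d k * fmode k z := by
    intro z
    rw [Complex.ofReal_sub, repr x z, repr y z, ← Summable.tsum_sub (hsummand x z) (hsummand y z)]
    refine tsum_congr fun k => ?_
    rw [hd]
    ring
  -- apply orthogonality
  have key : ((∫ z in Ioc (0:ℝ) 1, (G r (x - z) - G r (y - z)) ^ 2 : ℝ) : ℂ)
      = ∑' k : ℤ, d k * d (-k) := by
    have h1 : ((∫ z in Ioc (0:ℝ) 1, (G r (x - z) - G r (y - z)) ^ 2 : ℝ) : ℂ)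
        = ∫ z in Ioc (0:ℝ) 1, (((G r (x - z) - G r (y - z)) ^ 2 : ℝ) : ℂ) :=
      integral_ofReal.symm
    have h2 : ∀ z : ℝ, (((G r (x - z) - G r (y - z)) ^ 2 : ℝ) : ℂ)
        = (∑' k : ℤ, d k * fmode k z) * ∑' l : ℤ, d l * fmode l z := by
      intro z
      rw [← diff_repr z]
      push_cast
      ring
    rw [h1, MeasureTheory.integral_congr_ae (Filter.Eventually.of_forall h2)]
    exact orth hdnorm
  -- identify d k * d (-k)
  have dd : ∀ k : ℤ, d k * d (-k)
      = ((rexp (-(4 * π ^ 2 * r * (k:ℝ) ^ 2))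
          * (2 - 2 * Real.cos (2 * π * k * (x - y))) : ℝ) : ℂ) := by
    intro k
    have hcneg : c (-k) = c k := by simp [hc]
    rw [hd]
    simp only [hcneg]
    have expand : (E (-(2 * π * k * x)) - E (-(2 * π * k * y)))
        * (E (-(2 * π * (-k:ℤ) * x)) - E (-(2 * π * (-k:ℤ) * y)))
        = 2 - 2 * Real.cos (2 * π * k * (x - y)) := by
      have h1 : (-(2 * π * ((-k:ℤ):ℝ) * x)) = 2 * π * k * x := by push_cast; ring
      have h2 : (-(2 * π * ((-k:ℤ):ℝ) * y)) = 2 * π * k * y := by push_cast; ring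
      rw [h1, h2]
      have p11 : E (-(2 * π * k * x)) * E (2 * π * k * x) = 1 := by
        rw [E_mul, show -(2 * π * (k:ℝ) * x) + 2 * π * k * x = 0 by ring, E,
          Complex.ofReal_zero, zero_mul, Complex.exp_zero]
      have p22 : E (-(2 * π * k * y)) * E (2 * π * k * y) = 1 := by
        rw [E_mul, show -(2 * π * (k:ℝ) * y) + 2 * π * k * y = 0 by ring, E,
          Complex.ofReal_zero, zero_mul, Complex.exp_zero]
      have p12 : E (-(2 * π * k * x)) * E (2 * π * k * y)
          + E (-(2 * π * k * y)) * E (2 * π * k * x)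
          = 2 * Real.cos (2 * π * k * (x - y)) := by
        rw [E_mul, E_mul,
          show -(2 * π * (k:ℝ) * x) + 2 * π * k * y = -(2 * π * k * (x - y)) by ring,
          show -(2 * π * (k:ℝ) * y) + 2 * π * k * x = 2 * π * k * (x - y) by ring,
          add_comm, E_add_neg]
      linear_combination p11 + p22 - p12
    calc (c k : ℂ) * (E (-(2 * π * k * x)) - E (-(2 * π * k * y)))
        * ((c k : ℂ) * (E (-(2 * π * (-k:ℤ) * x)) - E (-(2 * π * (-k:ℤ) * y))))
        = ((c k : ℂ) * c k) * ((E (-(2 * π * k * x)) - E (-(2 * π * k * y)))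
          * (E (-(2 * π * (-k:ℤ) * x)) - E (-(2 * π * (-k:ℤ) * y)))) := by ring
      _ = ((rexp (-(4 * π ^ 2 * r * (k:ℝ) ^ 2))
          * (2 - 2 * Real.cos (2 * π * k * (x - y))) : ℝ) : ℂ) := by
          rw [expand]
          have creal : c k * c k = rexp (-(4 * π ^ 2 * r * (k:ℝ) ^ 2)) := by
            rw [hc, ← Real.exp_add]
            congr 1
            ring
          rw [← Complex.ofReal_mul, creal, Complex.ofReal_mul]
          congr 1
          push_cast
          ring
  rw [funext dd, ← Complex.ofReal_tsum] at key
  exact_mod_cast key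

lemma integral_exp_neg_le {a t : ℝ} (ha : 0 < a) (ht : 0 ≤ t) :
    ∫ r in Ioc (0:ℝ) t, rexp (-(a * r)) ≤ a⁻¹ := by
  have D : ∀ r : ℝ, HasDerivAt (fun u => -(a⁻¹) * rexp (-(a * u))) (rexp (-(a * r))) r := by
    intro r
    have h1 : HasDerivAt (fun u : ℝ => -(a * u)) (-a) r := by
      simpa using ((hasDerivAt_id r).const_mul (-a))
    have h3 := ((Real.hasDerivAt_exp (-(a * r))).comp r h1).const_mul (-(a⁻¹))
    convert h3 using 1
    · rfl
    · rfl
    · rfl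
    · have hne : a ≠ 0 := ha.ne'
      field_simp
  rw [← intervalIntegral.integral_of_le ht,
    intervalIntegral.integral_deriv_eq_sub' _ (funext fun r => (D r).deriv)
      (fun r _ => (D r).differentiableAt) (by fun_prop)]
  have h4 : (0:ℝ) ≤ rexp (-(a * t)) := (Real.exp_pos _).le
  have h5 : rexp (-(a * 0)) = 1 := by simp
  rw [h5]
  have h6 : -(a⁻¹) * rexp (-(a * t)) ≤ 0 :=
    mul_nonpos_of_nonpos_of_nonneg (by simp [inv_nonneg.2 ha.le]) h4
  linarith

lemma tail_sum_le {N : ℕ} (hN : 1 ≤ N) :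
    ∑' n : ℕ, (((N:ℝ) + n + 1) ^ 2)⁻¹ ≤ (N:ℝ)⁻¹ := by
  have hN1 : (1:ℝ) ≤ (N:ℝ) := by exact_mod_cast hN
  have hpos : ∀ n : ℕ, (0:ℝ) < (N:ℝ) + n := fun n => by
    have : (0:ℝ) ≤ n := Nat.cast_nonneg n
    linarith
  have hw : HasSum (fun n : ℕ => ((N:ℝ) + n)⁻¹ - ((N:ℝ) + n + 1)⁻¹) (N:ℝ)⁻¹ := by
    have hnn : ∀ n : ℕ, 0 ≤ ((N:ℝ) + n)⁻¹ - ((N:ℝ) + n + 1)⁻¹ := fun n => by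
      have h1 : (0:ℝ) < (N:ℝ) + n := hpos n
      have h2 : ((N:ℝ) + n + 1)⁻¹ ≤ ((N:ℝ) + n)⁻¹ := by
        apply inv_anti₀ h1
        linarith
      linarith
    rw [hasSum_iff_tendsto_nat_of_nonneg hnn]
    have hpart : ∀ m : ℕ, ∑ n ∈ Finset.range m, (((N:ℝ) + n)⁻¹ - ((N:ℝ) + n + 1)⁻¹)
        = (N:ℝ)⁻¹ - ((N:ℝ) + m)⁻¹ := by
      intro m
      have h := Finset.sum_range_sub' (f := fun n : ℕ => ((N:ℝ) + n)⁻¹) m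
      have hterm : ∀ n : ℕ, ((N:ℝ) + n)⁻¹ - ((N:ℝ) + n + 1)⁻¹
          = ((N:ℝ) + n)⁻¹ - ((N:ℝ) + ((n + 1 : ℕ) : ℝ))⁻¹ := fun n => by push_cast; ring
      simp only [hterm]
      simpa using h
    simp only [hpart]
    have h0 : Filter.Tendsto (fun m : ℕ => ((N:ℝ) + m)⁻¹) Filter.atTop (nhds 0) :=
      Filter.Tendsto.comp tendsto_inv_atTop_zero
        (Filter.tendsto_atTop_add_const_left _ (N:ℝ) tendsto_natCast_atTop_atTop)
    simpa using tendsto_const_nhds.sub h0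
  have hpt : ∀ n : ℕ, (((N:ℝ) + n + 1) ^ 2)⁻¹ ≤ ((N:ℝ) + n)⁻¹ - ((N:ℝ) + n + 1)⁻¹ := by
    intro n
    have h1 : (0:ℝ) < (N:ℝ) + n := hpos n
    have heq : ((N:ℝ) + n)⁻¹ - ((N:ℝ) + n + 1)⁻¹ = (((N:ℝ) + n) * ((N:ℝ) + n + 1))⁻¹ := by
      field_simp
      ring
    rw [heq]
    apply inv_anti₀ (by positivity)
    nlinarith
  calc ∑' n : ℕ, (((N:ℝ) + n + 1) ^ 2)⁻¹
      ≤ ∑' n : ℕ, (((N:ℝ) + n)⁻¹ - ((N:ℝ) + n + 1)⁻¹) :=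
        Summable.tsum_le_tsum hpt
          (Summable.of_nonneg_of_le (fun n => by positivity) hpt hw.summable) hw.summable
    _ = (N:ℝ)⁻¹ := hw.tsum_eq

lemma summable_shift_inv_sq : Summable (fun n : ℕ => (((n:ℝ) + 1) ^ 2)⁻¹) := by
  have base : Summable (fun n : ℕ => ((n:ℝ) ^ 2)⁻¹) := by
    simpa [one_div] using Real.summable_one_div_nat_pow.mpr (by norm_num : 1 < 2)
  have := (summable_nat_add_iff 1).mpr base
  simpa [Nat.cast_add, Nat.cast_one] using this

lemma tsum_min_le {h : ℝ} (hh : |h| ≤ 1) :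
    ∑' n : ℕ, min (h ^ 2) ((((n:ℝ) + 1) ^ 2)⁻¹) ≤ 3 * |h| := by
  rcases eq_or_ne h 0 with rfl | hne
  · rw [show (fun n : ℕ => min ((0:ℝ) ^ 2) ((((n:ℝ) + 1) ^ 2)⁻¹)) = fun _ => 0 from
      funext fun n => by rw [show ((0:ℝ) ^ 2) = 0 by norm_num, min_eq_left (by positivity)]]
    simp
  have hpos : 0 < |h| := abs_pos.2 hne
  set N := ⌈|h|⁻¹⌉₊ with hNdef
  have hinv1 : (1:ℝ) ≤ |h|⁻¹ := by
    rw [← one_div]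
    exact one_le_one_div hpos hh
  have hN1 : 1 ≤ N := Nat.one_le_ceil_iff.2 (by positivity)
  have hNge : |h|⁻¹ ≤ (N:ℝ) := Nat.le_ceil _
  have hNle : (N:ℝ) ≤ 2 * |h|⁻¹ := by
    have := Nat.ceil_lt_add_one (le_of_lt (by positivity : (0:ℝ) < |h|⁻¹))
    rw [← hNdef] at this
    linarith
  set u : ℕ → ℝ := fun n => if n < N then h ^ 2 else 0 with hu_def
  set v : ℕ → ℝ := fun n => if n < N then 0 else (((n:ℝ) + 1) ^ 2)⁻¹ with hv_def
  have point : ∀ n : ℕ, min (h ^ 2) ((((n:ℝ) + 1) ^ 2)⁻¹) ≤ u n + v n := by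
    intro n
    by_cases hn : n < N <;> simp [hu_def, hv_def, hn, min_le_left, min_le_right]
  have hu : Summable u := summable_of_ne_finset_zero (s := Finset.range N) (fun b hb => by
    rw [hu_def]
    exact if_neg (by simpa using hb))
  have hvnn : ∀ n : ℕ, 0 ≤ v n := fun n => by
    by_cases hn : n < N <;> simp only [hv_def, hn, if_true, if_false] <;> positivity
  have hvle : ∀ n : ℕ, v n ≤ (((n:ℝ) + 1) ^ 2)⁻¹ := fun n => by
    by_cases hn : n < N <;> simp only [hv_def, hn, if_true, if_false]
    · positivity
    · exact le_refl _
  have hv : Summable v := Summable.of_nonneg_of_le hvnn hvle summable_shift_inv_sq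
  have hmin : Summable (fun n : ℕ => min (h ^ 2) ((((n:ℝ) + 1) ^ 2)⁻¹)) :=
    Summable.of_nonneg_of_le (fun n => le_min (sq_nonneg h) (by positivity))
      (fun n => min_le_right _ _) summable_shift_inv_sq
  have hsumu : ∑' n, u n = (N:ℝ) * h ^ 2 := by
    rw [tsum_eq_sum (s := Finset.range N) (fun b hb => by
      rw [hu_def]; exact if_neg (by simpa using hb))]
    calc ∑ n ∈ Finset.range N, u n = ∑ _n ∈ Finset.range N, h ^ 2 :=
          Finset.sum_congr rfl fun n hn => by
            rw [hu_def]; exact if_pos (Finset.mem_range.1 hn)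
      _ = (N:ℝ) * h ^ 2 := by rw [Finset.sum_const, Finset.card_range, nsmul_eq_mul]
  have hsumv : ∑' n, v n ≤ (N:ℝ)⁻¹ := by
    have hz : ∑ n ∈ Finset.range N, v n = 0 := Finset.sum_eq_zero fun n hn => by
      rw [hv_def]; exact if_pos (Finset.mem_range.1 hn)
    calc ∑' n, v n = ∑ n ∈ Finset.range N, v n + ∑' n : ℕ, v (n + N) :=
          (Summable.sum_add_tsum_nat_add N hv).symm
      _ = ∑' n : ℕ, (((N:ℝ) + n + 1) ^ 2)⁻¹ := by
          rw [hz, zero_add]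
          refine tsum_congr fun n => ?_
          rw [hv_def]
          simp only [if_neg (by omega : ¬ (n + N < N))]
          push_cast
          ring_nf
      _ ≤ (N:ℝ)⁻¹ := tail_sum_le hN1
  have h2 : 2 * |h|⁻¹ * h ^ 2 = 2 * |h| := by
    rw [← sq_abs, sq, ← mul_assoc, mul_assoc 2, inv_mul_cancel₀ hpos.ne', mul_one]
  have h3 : (N:ℝ)⁻¹ ≤ |h| := by
    have := inv_anti₀ (by positivity : (0:ℝ) < |h|⁻¹) hNge
    rwa [inv_inv] at this
  calc ∑' n : ℕ, min (h ^ 2) ((((n:ℝ) + 1) ^ 2)⁻¹)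
      ≤ ∑' n, (u n + v n) := Summable.tsum_le_tsum point hmin (hu.add hv)
    _ = ∑' n, u n + ∑' n, v n := Summable.tsum_add hu hv
    _ ≤ 3 * |h| := by
        have hb : (N:ℝ) * h ^ 2 ≤ 2 * |h|⁻¹ * h ^ 2 :=
          mul_le_mul_of_nonneg_right hNle (sq_nonneg h)
        rw [hsumu]
        rw [h2] at hb
        linarith [hsumv]

lemma summable_inv_sq_nat : Summable (fun n : ℕ => ((n:ℝ) ^ 2)⁻¹) := by
  simpa [one_div] using Real.summable_one_div_nat_pow.mpr (by norm_num : 1 < 2)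

lemma summable_shift_inv_sq' : Summable (fun n : ℕ => (((n:ℝ) + 1) ^ 2)⁻¹) := by
  have := (summable_nat_add_iff 1).mpr summable_inv_sq_nat
  simpa [Nat.cast_add, Nat.cast_one] using this

lemma summable_min_nat (h : ℝ) : Summable (fun n : ℕ => min (h ^ 2) (((n:ℝ) ^ 2)⁻¹)) :=
  Summable.of_nonneg_of_le (fun n => le_min (sq_nonneg h) (by positivity))
    (fun n => min_le_right _ _) summable_inv_sq_nat

lemma summable_min_int (h : ℝ) : Summable (fun k : ℤ => min (h ^ 2) (((k:ℝ) ^ 2)⁻¹)) := by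
  refine Summable.of_nat_of_neg ?_ ?_
  · simpa using summable_min_nat h
  · have : ∀ n : ℕ, min (h ^ 2) ((((-(n:ℤ)):ℝ)) ^ 2)⁻¹ = min (h ^ 2) (((n:ℝ) ^ 2)⁻¹) := by
      intro n; push_cast; rw [neg_pow]; norm_num
    simpa [this] using summable_min_nat h

lemma tsum_int_min_le {h : ℝ} (hh : |h| ≤ 1) :
    ∑' k : ℤ, min (h ^ 2) (((k:ℝ) ^ 2)⁻¹) ≤ 6 * |h| := by
  have hZ := summable_min_int h
  rw [← tsum_nat_add_neg_add_one hZ]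
  rw [tsum_congr (fun n : ℕ => show
      min (h ^ 2) (((((n:ℕ):ℤ):ℝ)) ^ 2)⁻¹ + min (h ^ 2) (((Int.cast (-(((n:ℕ):ℤ) + 1)) : ℝ)) ^ 2)⁻¹
      = min (h ^ 2) (((n:ℝ) ^ 2)⁻¹) + min (h ^ 2) ((((n:ℝ) + 1) ^ 2)⁻¹) from by
    push_cast
    rw [Even.neg_pow even_two])]

  have ha : Summable (fun n : ℕ => min (h ^ 2) (((n:ℝ) ^ 2)⁻¹)) := summable_min_nat h
  have hb : Summable (fun n : ℕ => min (h ^ 2) ((((n:ℝ) + 1) ^ 2)⁻¹)) :=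
    Summable.of_nonneg_of_le (fun n => le_min (sq_nonneg h) (by positivity))
      (fun n => min_le_right _ _) summable_shift_inv_sq'
  rw [Summable.tsum_add ha hb]
  have hshift : ∑' n : ℕ, min (h ^ 2) (((n:ℝ) ^ 2)⁻¹)
      = ∑' n : ℕ, min (h ^ 2) ((((n:ℝ) + 1) ^ 2)⁻¹) := by
    rw [Summable.tsum_eq_zero_add ha]
    have h0 : min (h ^ 2) ((((0:ℕ):ℝ)) ^ 2)⁻¹ = 0 := by
      norm_num
      exact sq_nonneg h
    rw [h0, zero_add]
    refine tsum_congr fun n => ?_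
    congr 1
    push_cast
    ring
  rw [hshift]
  have := tsum_min_le hh
  linarith

lemma gb_le (h : ℝ) (k : ℤ) :
    (2 - 2 * Real.cos (2 * π * k * h)) * (4 * π ^ 2 * (k:ℝ) ^ 2)⁻¹
      ≤ min (h ^ 2) (((k:ℝ) ^ 2)⁻¹) := by
  rcases eq_or_ne k 0 with rfl | hk
  · simp only [Int.cast_zero, mul_zero, zero_mul, Real.cos_zero]
    norm_num
    positivity
  · have hkR : ((k:ℝ)) ≠ 0 := Int.cast_ne_zero.2 hk
    have hπ3 : (3:ℝ) < π := Real.pi_gt_three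
    have hc1 : 2 - 2 * Real.cos (2 * π * k * h) ≤ (2 * π * k * h) ^ 2 := by
      nlinarith [Real.one_sub_sq_div_two_le_cos (x := 2 * π * k * h)]
    have hc2 : 2 - 2 * Real.cos (2 * π * k * h) ≤ 4 := by
      nlinarith [Real.neg_one_le_cos (2 * π * k * h)]
    have hpos : (0:ℝ) < 4 * π ^ 2 * (k:ℝ) ^ 2 := by positivity
    refine le_min ?_ ?_
    · refine (mul_le_mul_of_nonneg_right hc1 (inv_nonneg.2 hpos.le)).trans (le_of_eq ?_)
      field_simp
      ring
    · refine (mul_le_mul_of_nonneg_right hc2 (inv_nonneg.2 hpos.le)).trans ?_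
      rw [show (4:ℝ) * π ^ 2 * (k:ℝ) ^ 2 = 4 * (π ^ 2 * (k:ℝ) ^ 2) by ring, mul_inv,
        ← mul_assoc, mul_inv_cancel₀ (by norm_num : (4:ℝ) ≠ 0), one_mul]
      have h9 : (9:ℝ) ≤ π ^ 2 := by nlinarith
      exact inv_anti₀ (by positivity) (by nlinarith [sq_nonneg ((k:ℝ))])

lemma gb_nonneg (h : ℝ) (k : ℤ) :
    0 ≤ (2 - 2 * Real.cos (2 * π * k * h)) * (4 * π ^ 2 * (k:ℝ) ^ 2)⁻¹ := by
  apply mul_nonneg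
  · nlinarith [Real.cos_le_one (2 * π * k * h)]
  · positivity

lemma summable_gb (h : ℝ) :
    Summable (fun k : ℤ =>
      (2 - 2 * Real.cos (2 * π * k * h)) * (4 * π ^ 2 * (k:ℝ) ^ 2)⁻¹) :=
  Summable.of_nonneg_of_le (gb_nonneg h) (gb_le h) (summable_min_int h)

lemma outer_le {t x y : ℝ} (ht0 : 0 < t) (hxy : |x - y| ≤ 1) :
    (∫ r in Ioc (0:ℝ) t, ∫ z in Ioc (0:ℝ) 1, (G r (x - z) - G r (y - z)) ^ 2)
      ≤ 6 * |x - y| := by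
  set f : ℤ → ℝ → ℝ := fun k r => rexp (-(4 * π ^ 2 * r * (k:ℝ) ^ 2))
    * (2 - 2 * Real.cos (2 * π * k * (x - y))) with hf_def
  set Tb : ℤ → ℝ := fun k =>
    (2 - 2 * Real.cos (2 * π * k * (x - y))) * (4 * π ^ 2 * (k:ℝ) ^ 2)⁻¹ with hTb_def
  have hfnn : ∀ k r, 0 ≤ f k r := fun k r => by
    apply mul_nonneg (Real.exp_pos _).le
    nlinarith [Real.cos_le_one (2 * π * k * (x - y))]
  have hfc : ∀ k : ℤ, Continuous (f k) := fun k => by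
    apply Continuous.mul _ continuous_const
    fun_prop
  have hfint : ∀ k : ℤ, IntegrableOn (f k) (Ioc (0:ℝ) t) volume := fun k =>
    (hfc k).integrableOn_Ioc
  have hTle : ∀ k : ℤ, (∫ r in Ioc (0:ℝ) t, f k r) ≤ Tb k := by
    intro k
    rcases eq_or_ne k 0 with rfl | hk
    · have : f 0 = fun _ => 0 := by
        funext r
        simp [hf_def, Real.cos_zero]
      rw [this]
      simp [hTb_def, Real.cos_zero]
    · have hkR : ((k:ℝ)) ≠ 0 := Int.cast_ne_zero.2 hk
      have ha : (0:ℝ) < 4 * π ^ 2 * (k:ℝ) ^ 2 := by positivity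
      have harg : ∀ r : ℝ, -(4 * π ^ 2 * r * (k:ℝ) ^ 2) = -((4 * π ^ 2 * (k:ℝ) ^ 2) * r) := by
        intro r; ring
      have hCnn : 0 ≤ 2 - 2 * Real.cos (2 * π * k * (x - y)) := by
        nlinarith [Real.cos_le_one (2 * π * k * (x - y))]
      calc (∫ r in Ioc (0:ℝ) t, f k r)
          = (∫ r in Ioc (0:ℝ) t, rexp (-((4 * π ^ 2 * (k:ℝ) ^ 2) * r)))
              * (2 - 2 * Real.cos (2 * π * k * (x - y))) := by
            rw [← integral_mul_const]
            refine setIntegral_congr_fun measurableSet_Ioc fun r _ => ?_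
            rw [hf_def]
            simp only
            rw [harg r]
        _ ≤ (4 * π ^ 2 * (k:ℝ) ^ 2)⁻¹ * (2 - 2 * Real.cos (2 * π * k * (x - y))) :=
            mul_le_mul_of_nonneg_right (integral_exp_neg_le ha ht0.le) hCnn
        _ = Tb k := by rw [hTb_def]; ring
  have hTnn : ∀ k : ℤ, 0 ≤ ∫ r in Ioc (0:ℝ) t, f k r := fun k =>
    integral_nonneg (fun r => hfnn k r)
  have hTbsum : Summable Tb := summable_gb (x - y)
  have hTsum : Summable (fun k : ℤ => ∫ r in Ioc (0:ℝ) t, f k r) :=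
    Summable.of_nonneg_of_le hTnn hTle hTbsum
  -- rewrite the inner integral and swap
  have step0 : (∫ r in Ioc (0:ℝ) t, ∫ z in Ioc (0:ℝ) 1, (G r (x - z) - G r (y - z)) ^ 2)
      = ∫ r in Ioc (0:ℝ) t, ∑' k : ℤ, f k r :=
    setIntegral_congr_fun measurableSet_Ioc fun r hr => inner_eq hr.1 x y
  have swap : (∫ r in Ioc (0:ℝ) t, ∑' k : ℤ, f k r)
      = ∑' k : ℤ, ∫ r in Ioc (0:ℝ) t, f k r := by
    refine integral_tsum (fun k => (hfc k).aestronglyMeasurable) ?_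
    have heq : ∀ k : ℤ, (∫⁻ r in Ioc (0:ℝ) t, ‖f k r‖₊)
        = ENNReal.ofReal (∫ r in Ioc (0:ℝ) t, f k r) := by
      intro k
      rw [MeasureTheory.ofReal_integral_eq_lintegral_ofReal (hfint k)
        (Filter.Eventually.of_forall fun r => hfnn k r)]
      refine lintegral_congr fun r => ?_
      rw [← enorm_eq_nnnorm, ← ofReal_norm, Real.norm_eq_abs, abs_of_nonneg (hfnn k r)]
    simp only [enorm_eq_nnnorm, heq]
    have hle : (∑' k : ℤ, ENNReal.ofReal (∫ r in Ioc (0:ℝ) t, f k r))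
        ≤ ∑' k : ℤ, ENNReal.ofReal (Tb k) :=
      ENNReal.tsum_le_tsum fun k => ENNReal.ofReal_le_ofReal (hTle k)
    rw [← ENNReal.ofReal_tsum_of_nonneg (fun k => gb_nonneg (x - y) k) hTbsum] at hle
    exact (hle.trans_lt ENNReal.ofReal_lt_top).ne
  rw [step0, swap]
  calc (∑' k : ℤ, ∫ r in Ioc (0:ℝ) t, f k r)
      ≤ ∑' k : ℤ, Tb k := Summable.tsum_le_tsum hTle hTsum hTbsum
    _ ≤ ∑' k : ℤ, min ((x - y) ^ 2) (((k:ℝ) ^ 2)⁻¹) :=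
        Summable.tsum_le_tsum (gb_le (x - y)) hTbsum (summable_min_int (x - y))
    _ ≤ 6 * |x - y| := tsum_int_min_le hxy

theorem heat_kernel_space_holder :
    ∃ C > 0, ∀ s t x y : ℝ, 0 < s → s < t → t ≤ 1 →
      x ∈ Icc (0:ℝ) 1 → y ∈ Icc (0:ℝ) 1 →
      (∫ r in Ioc (0:ℝ) t, ∫ z in Ioc (0:ℝ) 1, (G r (x - z) - G r (y - z)) ^ 2)
        ≤ C * |x - y| := by
  refine ⟨6, by norm_num, fun s t x y hs hst ht1 hx hy => ?_⟩
  have ht0 : 0 < t := hs.trans hst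
  have hxy : |x - y| ≤ 1 := by
    rw [abs_le]
    constructor <;> [linarith [hx.1, hy.2]; linarith [hx.2, hy.1]]
  exact outer_le ht0 hxy
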